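/- arXiv:2001.02874 — 8 statements merged into one kernel-verified Lean document; each statement's English description precedes it below -/
import Mathlib

section
/- Let L and M be groups, let L act on M by group automorphisms (a `MulDistribMulAction L M`), and let ∂ : M →* L satisfy the equivariance condition ∂ (l • m) = l * ∂ m * l⁻¹ and the Peiffer condition (∂ m) • m' = m * m' * m⁻¹ for all l : L and m, m' : M. Then the displacement subgroup [L,M] := Subgroup.closure {x : M | ∃ (l : L) (m : M), x = (l • m) * m⁻¹} is a normal subgroup of M, and it contains every commutator of M: for all m, m' : M one has m * m' * m⁻¹ * m'⁻¹ ∈ [L,M]. In particular the quotient group M ⧸ [L,M] is commutative. -/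
/-- For a crossed module of groups `d : M →* L`, the displacement
subgroup `[L,M]` is normal in `M`, contains all commutators of `M`, and hence
the quotient `M ⧸ [L,M]` is commutative. -/
theorem displacement_subgroup_normal_and_contains_commutators
    {L M : Type*} [Group L] [Group M] [MulDistribMulAction L M]
    (d : M →* L)
    (hequiv : ∀ (l : L) (m : M), d (l • m) = l * d m * l⁻¹)
    (hpeiffer : ∀ (m m' : M), (d m) • m' = m * m' * m⁻¹) :
    (Subgroup.closure {x : M | ∃ (l : L) (m : M), x = (l • m) * m⁻¹}).Normal ∧
    (∀ m m' : M,
      m * m' * m⁻¹ * m'⁻¹ ∈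
        Subgroup.closure {x : M | ∃ (l : L) (m : M), x = (l • m) * m⁻¹}) ∧
    (∀ a b : M,
      (QuotientGroup.mk (a * b) :
          M ⧸ Subgroup.closure {x : M | ∃ (l : L) (m : M), x = (l • m) * m⁻¹}) =
        QuotientGroup.mk (b * a)) := by
  set S : Set M := {x : M | ∃ (l : L) (m : M), x = (l • m) * m⁻¹} with hS
  have hgen : ∀ (l : L) (m : M), (l • m) * m⁻¹ ∈ Subgroup.closure S := fun l m =>
    Subgroup.subset_closure ⟨l, m, rfl⟩
  have hstable : ∀ (l' : L) (x : M), x ∈ Subgroup.closure S →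
      l' • x ∈ Subgroup.closure S := by
    intro l' x hx
    induction hx using Subgroup.closure_induction with
    | mem y hy =>
        obtain ⟨l, m, rfl⟩ := hy
        rw [smul_mul', smul_smul, smul_inv']
        have heq : (l' * l) • m * (l' • m)⁻¹
            = ((l' * l) • m * m⁻¹) * ((l' • m) * m⁻¹)⁻¹ := by group
        rw [heq]
        exact mul_mem (hgen _ _) (inv_mem (hgen _ _))
    | one => simpa using (Subgroup.closure S).one_mem
    | mul a b _ _ ha hb => rw [smul_mul']; exact mul_mem ha hb
    | inv a _ ha => rw [smul_inv']; exact inv_mem ha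
  have hnormal : (Subgroup.closure S).Normal := by
    constructor
    intro x hx n
    have key : n * x * n⁻¹ = (d n) • x := (hpeiffer n x).symm
    rw [key]
    exact hstable _ _ hx
  have hcomm : ∀ m m' : M, m * m' * m⁻¹ * m'⁻¹ ∈ Subgroup.closure S := by
    intro m m'
    have := hgen (d m) m'
    rwa [hpeiffer] at this
  refine ⟨hnormal, hcomm, ?_⟩
  intro a b
  have : (QuotientGroup.mk (a * b * a⁻¹ * b⁻¹) :
      M ⧸ Subgroup.closure S) = 1 := (QuotientGroup.eq_one_iff _).2 (hcomm a b)
  have h2 : (QuotientGroup.mk (a * b) : M ⧸ Subgroup.closure S) *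
      (QuotientGroup.mk (b * a))⁻¹ = 1 := by
    rw [← QuotientGroup.mk_inv, ← QuotientGroup.mk_mul, ← this]
    congr 1
    group
  exact mul_inv_eq_one.mp h2
end

section
/- Let (∂ : M →* L) and (∂' : M' →* L) be crossed modules of groups over the same group L, and let f : M →* M' be a surjective morphism of L-crossed modules, i.e. ∂' (f m) = ∂ m and f (l • m) = l • f m for all l : L, m : M. Then MonoidHom.ker f ≤ Subgroup.center M; that is, f regarded as a group homomorphism is a central extension of groups. -/
/-- A surjective morphism of `L`-crossed modules of groups is a
central extension of groups: its kernel is contained in the center of the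
domain. -/
theorem ker_of_surjective_xmod_morphism_le_center
    {L M M' : Type*} [Group L] [Group M] [Group M']
    [MulDistribMulAction L M] [MulDistribMulAction L M']
    (d : M →* L) (d' : M' →* L)
    (hequiv : ∀ (l : L) (m : M), d (l • m) = l * d m * l⁻¹)
    (hpeiffer : ∀ (m m' : M), (d m) • m' = m * m' * m⁻¹)
    (hequiv' : ∀ (l : L) (m : M'), d' (l • m) = l * d' m * l⁻¹)
    (hpeiffer' : ∀ (m m' : M'), (d' m) • m' = m * m' * m⁻¹)
    (f : M →* M') (hfsurj : Function.Surjective f)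
    (hfd : ∀ m : M, d' (f m) = d m)
    (hfequiv : ∀ (l : L) (m : M), f (l • m) = l • f m) :
    MonoidHom.ker f ≤ Subgroup.center M := by
  intro k hk
  rw [Subgroup.mem_center_iff]
  intro m
  have hdk : d k = 1 := by
    rw [← hfd k, MonoidHom.mem_ker.mp hk, map_one]
  have := hpeiffer k m
  rw [hdk, one_smul] at this
  conv_lhs => rw [this]
  group
end

section
/- Let (∂ : M →* L) and (∂' : M' →* L) be crossed modules of groups over the same group L and let f : M →* M' be a surjective morphism of L-crossed modules such that L acts trivially on ker f, i.e. l • k = k for all l : L and k ∈ MonoidHom.ker f. Form the semidirect product M ⋊[φ] L where φ : L →* MulAut M is the homomorphism determined by the action (MulDistribMulAction.toMulAut). Then the image of ker f under the canonical inclusion SemidirectProduct.inl : M →* M ⋊[φ] L is contained in the center: for every k ∈ MonoidHom.ker f, SemidirectProduct.inl k ∈ Subgroup.center (M ⋊[φ] L). -/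
/-- For a central extension `f` of `L`-crossed modules of groups
(a surjective morphism of `L`-crossed modules on whose kernel `L` acts
trivially), the image of `ker f` in the semidirect product `M ⋊ L` is central. -/
theorem inl_ker_le_center_semidirectProduct
    {L M M' : Type*} [Group L] [Group M] [Group M']
    [MulDistribMulAction L M] [MulDistribMulAction L M']
    (d : M →* L) (d' : M' →* L)
    (hequiv : ∀ (l : L) (m : M), d (l • m) = l * d m * l⁻¹)
    (hpeiffer : ∀ (m m' : M), (d m) • m' = m * m' * m⁻¹)
    (hequiv' : ∀ (l : L) (m : M'), d' (l • m) = l * d' m * l⁻¹)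
    (hpeiffer' : ∀ (m m' : M'), (d' m) • m' = m * m' * m⁻¹)
    (f : M →* M') (hfsurj : Function.Surjective f)
    (hfd : ∀ m : M, d' (f m) = d m)
    (hfequiv : ∀ (l : L) (m : M), f (l • m) = l • f m)
    (htriv : ∀ (l : L), ∀ k ∈ MonoidHom.ker f, l • k = k) :
    ∀ k ∈ MonoidHom.ker f,
      (SemidirectProduct.inl k : M ⋊[MulDistribMulAction.toMulAut L M] L)
        ∈ Subgroup.center (M ⋊[MulDistribMulAction.toMulAut L M] L) := by
  intro k hk
  have hdk : d k = 1 := by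
    rw [MonoidHom.mem_ker] at hk
    rw [← hfd k, hk, map_one]
  have hcomm : ∀ m : M, k * m = m * k := by
    intro m
    have h := hpeiffer k m
    rw [hdk, one_smul] at h
    exact (mul_inv_eq_iff_eq_mul.mp h.symm)
  rw [Subgroup.mem_center_iff]
  intro g
  ext
  · simp [htriv g.right k hk, hcomm g.left]
  · simp
end

section
/- Let C₁ and C₀ be groups and let d, c : C₁ →* C₀ and e : C₀ →* C₁ be group homomorphisms with d ∘ e = id and c ∘ e = id (a reflexive graph of groups). Then the normal closure in C₀ of the set {y : C₀ | ∃ x : C₁, y = d x * (c x)⁻¹} equals the normal closure of the image under c of the kernel of d: Subgroup.normalClosure {y | ∃ x, y = d x * (c x)⁻¹} = Subgroup.normalClosure ↑(Subgroup.map c (MonoidHom.ker d)). Equivalently, the coequalizer of d and c is the cokernel of the restriction of c to ker d. -/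
/-- For a reflexive graph of groups `d, c : C₁ →* C₀` with common
section `e`, the coequaliser of `d` and `c` coincides with the cokernel of the
restriction of `c` to `ker d`: the corresponding normal closures in `C₀` agree. -/
theorem coequalizer_eq_cokernel_of_reflexive_graph
    {C₁ C₀ : Type*} [Group C₁] [Group C₀]
    (d c : C₁ →* C₀) (e : C₀ →* C₁)
    (hde : ∀ x : C₀, d (e x) = x) (hce : ∀ x : C₀, c (e x) = x) :
    Subgroup.normalClosure {y : C₀ | ∃ x : C₁, y = d x * (c x)⁻¹}
      = Subgroup.normalClosure ↑(Subgroup.map c (MonoidHom.ker d)) := by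
  apply le_antisymm
  · apply Subgroup.normalClosure_le_normal
    rintro y ⟨x, rfl⟩
    have hz : x * (e (d x))⁻¹ ∈ MonoidHom.ker d := by
      simp [MonoidHom.mem_ker, hde]
    have : c (x * (e (d x))⁻¹) ∈ Subgroup.normalClosure
        ((Subgroup.map c (MonoidHom.ker d) : Subgroup C₀) : Set C₀) :=
      Subgroup.subset_normalClosure ⟨_, hz, rfl⟩
    have h := (Subgroup.normalClosure _).inv_mem this
    simpa [hce, mul_comm] using h
  · apply Subgroup.normalClosure_le_normal
    rintro y ⟨x, hx, rfl⟩
    have : (d x * (c x)⁻¹)⁻¹ ∈ Subgroup.normalClosure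
        {y : C₀ | ∃ x : C₁, y = d x * (c x)⁻¹} :=
      (Subgroup.normalClosure _).inv_mem (Subgroup.subset_normalClosure ⟨x, rfl⟩)
    simpa [MonoidHom.mem_ker.mp hx] using this
end

section
/- Let (∂ : M →* L, •) be a crossed module of groups, with displacement subgroup [L,M] := Subgroup.closure {x : M | ∃ (l : L) (m : M), x = (l • m) * m⁻¹}, and form the semidirect product M ⋊[φ] L where φ = MulDistribMulAction.toMulAut L M. Then [L,M] = ⊤ if and only if the normal closure in M ⋊[φ] L of the image of the canonical inclusion SemidirectProduct.inr : L →* M ⋊[φ] L is the whole group: Subgroup.normalClosure ↑(MonoidHom.range (SemidirectProduct.inr)) = ⊤. -/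
/-- An `L`-crossed module of groups is perfect (its displacement
subgroup is everything) if and only if the normal closure of `L` (embedded via
`inr`) in the semidirect product `M ⋊ L` is the whole group. -/
theorem perfect_iff_normalClosure_inr_eq_top
    {L M : Type*} [Group L] [Group M] [MulDistribMulAction L M]
    (d : M →* L)
    (hequiv : ∀ (l : L) (m : M), d (l • m) = l * d m * l⁻¹)
    (hpeiffer : ∀ (m m' : M), (d m) • m' = m * m' * m⁻¹) :
    Subgroup.closure {x : M | ∃ (l : L) (m : M), x = (l • m) * m⁻¹} = ⊤ ↔
    Subgroup.normalClosure
        ((MonoidHom.range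
          (SemidirectProduct.inr : L →* M ⋊[MulDistribMulAction.toMulAut L M] L) :
            Subgroup (M ⋊[MulDistribMulAction.toMulAut L M] L)) :
          Set (M ⋊[MulDistribMulAction.toMulAut L M] L))
      = ⊤ := by
  set φ := MulDistribMulAction.toMulAut L M
  set S : Set M := {x : M | ∃ (l : L) (m : M), x = (l • m) * m⁻¹} with hSdef
  set D := Subgroup.closure S with hDdef
  have hgen : ∀ (l : L) (m : M), (l • m) * m⁻¹ ∈ D :=
    fun l m => Subgroup.subset_closure ⟨l, m, rfl⟩
  have hgen' : ∀ (l : L) (m : M), m * l • m⁻¹ ∈ D := by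
    intro l m
    have := D.inv_mem (hgen l m)
    simpa [mul_inv_rev, smul_inv'] using this
  have hsmul : ∀ (l : L), ∀ x ∈ D, l • x ∈ D := by
    intro l x hx
    induction hx using Subgroup.closure_induction with
    | mem y hy =>
      obtain ⟨l', m, rfl⟩ := hy
      have key : l • ((l' • m) * m⁻¹) = ((l * l') • m * m⁻¹) * (m * l • m⁻¹) := by
        rw [smul_mul', smul_smul]
        group
      rw [key]
      exact D.mul_mem (hgen _ _) (hgen' _ _)
    | one => simpa using D.one_mem
    | mul a b _ _ ha hb => simpa [smul_mul'] using D.mul_mem ha hb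
    | inv a _ ha => simpa [smul_inv'] using D.inv_mem ha
  have hD : D.Normal := by
    constructor
    intro n hn g
    rw [← hpeiffer]
    exact hsmul (d g) n hn
  set N := Subgroup.normalClosure
      ((MonoidHom.range (SemidirectProduct.inr : L →* M ⋊[φ] L) :
        Subgroup (M ⋊[φ] L)) : Set (M ⋊[φ] L)) with hNdef
  have hinr : ∀ l : L, SemidirectProduct.inr l ∈ N :=
    fun l => Subgroup.subset_normalClosure ⟨l, rfl⟩
  constructor
  · intro hDtop
    rw [eq_top_iff]
    intro g _
    have hinl : ∀ m : M, (SemidirectProduct.inl m : M ⋊[φ] L) ∈ N := by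
      have hle : D ≤ N.comap (SemidirectProduct.inl : M →* M ⋊[φ] L) := by
        rw [hDdef, Subgroup.closure_le]
        rintro x ⟨l, m, rfl⟩
        have key : (SemidirectProduct.inl ((l • m) * m⁻¹) : M ⋊[φ] L) =
            (SemidirectProduct.inl (l • m) * SemidirectProduct.inr l⁻¹ *
              (SemidirectProduct.inl (l • m))⁻¹) * SemidirectProduct.inr l := by
          ext <;> simp [φ, smul_smul, smul_inv']
        have h1 : (SemidirectProduct.inl (l • m) * SemidirectProduct.inr l⁻¹ *
            (SemidirectProduct.inl (l • m))⁻¹ : M ⋊[φ] L) ∈ N := by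
          have := Subgroup.normalClosure_normal
            (s := ((MonoidHom.range (SemidirectProduct.inr : L →* M ⋊[φ] L) :
              Subgroup (M ⋊[φ] L)) : Set (M ⋊[φ] L)))
          exact this.conj_mem _ (hinr l⁻¹) _
        show (SemidirectProduct.inl ((l • m) * m⁻¹) : M ⋊[φ] L) ∈ N
        rw [key]
        exact N.mul_mem h1 (hinr l)
      intro m
      exact hle (hDtop ▸ Subgroup.mem_top m)
    have hg := N.mul_mem (hinl g.left) (hinr g.right)
    rwa [SemidirectProduct.inl_left_mul_inr_right] at hg
  · intro hNtop
    haveI := hD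
    let q : M →* M ⧸ D := QuotientGroup.mk' D
    have hqact : ∀ (l : L) (m : M), q (l • m) = q m := by
      intro l m
      rw [QuotientGroup.mk'_eq_mk']
      refine ⟨(l • m)⁻¹ * m, ?_, by group⟩
      have := D.inv_mem (hgen' l m⁻¹)
      simpa [mul_inv_rev, smul_inv'] using this
    let ψ : M ⋊[φ] L →* M ⧸ D :=
      { toFun := fun g => q g.left
        map_one' := by simp
        map_mul' := by
          intro g h
          simp only [SemidirectProduct.mul_left, map_mul]
          congr 1
          exact hqact g.right h.left }
    have hker : N ≤ ψ.ker := by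
      apply Subgroup.normalClosure_le_normal
      rintro x ⟨l, rfl⟩
      show ψ (SemidirectProduct.inr l) = 1
      simp [ψ]
    rw [eq_top_iff]
    intro m _
    have : ψ (SemidirectProduct.inl m) = 1 := hker (hNtop ▸ Subgroup.mem_top _)
    have : q m = 1 := by simpa [ψ] using this
    exact (QuotientGroup.eq_one_iff m).mp this
end

section
/- Let A, A', B, B' be groups, and let f : A →* B, f' : A' →* B', α : A →* A', β : B →* B' be surjective group homomorphisms with f' ∘ α = β ∘ f. Then the induced map between kernels is surjective if and only if the square is a regular pushout; explicitly: (∀ a' ∈ MonoidHom.ker f', ∃ a ∈ MonoidHom.ker f, α a = a') ↔ (∀ (a' : A') (b : B), f' a' = β b → ∃ a : A, α a = a' ∧ f a = b). -/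
/-- In a commutative square of surjective group homomorphisms, the
induced map between the kernels is surjective if and only if the square is a
regular pushout (the comparison to the pullback is surjective). -/
theorem ker_map_surjective_iff_regular_pushout
    {A A' B B' : Type*} [Group A] [Group A'] [Group B] [Group B']
    (f : A →* B) (f' : A' →* B') (α : A →* A') (β : B →* B')
    (hf : Function.Surjective f) (hf' : Function.Surjective f')
    (hα : Function.Surjective α) (hβ : Function.Surjective β)
    (hcomm : ∀ a : A, f' (α a) = β (f a)) :
    (∀ a' ∈ MonoidHom.ker f', ∃ a ∈ MonoidHom.ker f, α a = a') ↔
    (∀ (a' : A') (b : B), f' a' = β b → ∃ a : A, α a = a' ∧ f a = b) := by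
  constructor
  · intro h a' b hab
    obtain ⟨a₀, ha₀⟩ := hf b
    have hk : a' * (α a₀)⁻¹ ∈ MonoidHom.ker f' := by
      rw [MonoidHom.mem_ker]
      simp [hcomm, ha₀, hab]
    obtain ⟨k, hk1, hk2⟩ := h _ hk
    refine ⟨k * a₀, ?_, ?_⟩
    · simp [hk2]
    · have := hk1
      simp only [MonoidHom.mem_ker] at this
      simp [this, ha₀]
  · intro h a' ha'
    have : f' a' = β 1 := by
      simpa [MonoidHom.mem_ker] using ha'
    obtain ⟨a, h1, h2⟩ := h a' 1 this
    exact ⟨a, by simp [MonoidHom.mem_ker, h2], h1⟩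
end

section
/- Let (∂ : M →* L) and (∂' : M' →* L) be crossed modules of groups over the same group L and suppose f : M →* M' and g : M' →* M are morphisms of L-crossed modules with f ∘ g = id (a split short exact sequence of L-crossed modules with kernel K := ker f). Then the intersection of the displacement subgroup of M with ker f equals the subgroup generated by the displacements of elements of ker f: (Subgroup.closure {x : M | ∃ l m, x = (l • m) * m⁻¹}) ⊓ MonoidHom.ker f = Subgroup.closure {x : M | ∃ (l : L), ∃ k ∈ MonoidHom.ker f, x = (l • k) * k⁻¹}. -/
/-- For a split short exact sequence of `L`-crossed modules of
groups with kernel `K = ker f`, the intersection of the displacement subgroup of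
`M` with `ker f` is the subgroup generated by the displacements of elements of
`ker f` (protoadditivity of the displacement commutator). -/
theorem displacement_inf_ker_eq_displacement_of_ker
    {L M M' : Type*} [Group L] [Group M] [Group M']
    [MulDistribMulAction L M] [MulDistribMulAction L M']
    (d : M →* L) (d' : M' →* L)
    (hequiv : ∀ (l : L) (m : M), d (l • m) = l * d m * l⁻¹)
    (hpeiffer : ∀ (m m' : M), (d m) • m' = m * m' * m⁻¹)
    (hequiv' : ∀ (l : L) (m : M'), d' (l • m) = l * d' m * l⁻¹)
    (hpeiffer' : ∀ (m m' : M'), (d' m) • m' = m * m' * m⁻¹)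
    (f : M →* M') (g : M' →* M)
    -- f and g are morphisms of L-crossed modules
    (hfd : ∀ m : M, d' (f m) = d m)
    (hfequiv : ∀ (l : L) (m : M), f (l • m) = l • f m)
    (hgd : ∀ m : M', d (g m) = d' m)
    (hgequiv : ∀ (l : L) (m : M'), g (l • m) = l • g m)
    -- g splits f
    (hsplit : ∀ m : M', f (g m) = m) :
    (Subgroup.closure {x : M | ∃ (l : L) (m : M), x = (l • m) * m⁻¹}) ⊓
        MonoidHom.ker f
      = Subgroup.closure
          {x : M | ∃ (l : L), ∃ k ∈ MonoidHom.ker f, x = (l • k) * k⁻¹} := by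
  -- ker f is central in M
  have hcentral : ∀ k ∈ f.ker, ∀ m : M, k * m * k⁻¹ = m := by
    intro k hk m
    have hdk : d k = 1 := by
      have h1 := hfd k
      rw [MonoidHom.mem_ker.mp hk, map_one] at h1
      exact h1.symm
    have h2 := hpeiffer k m
    rw [hdk, one_smul] at h2
    exact h2.symm
  have hker_p : ∀ m : M, m * (g (f m))⁻¹ ∈ f.ker := by
    intro m
    simp [MonoidHom.mem_ker, hsplit]
  -- the retraction onto ker f
  let p : M →* M :=
    { toFun := fun m => m * (g (f m))⁻¹
      map_one' := by simp
      map_mul' := by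
        intro m n
        simp only [map_mul, mul_inv_rev]
        have hc := hcentral _ (hker_p n) (g (f m))⁻¹
        rw [mul_inv_eq_iff_eq_mul] at hc
        rw [mul_assoc m (g (f m))⁻¹, ← hc]
        simp [mul_assoc] }
  have hp : ∀ m : M, p m = m * (g (f m))⁻¹ := fun _ => rfl
  have hpequiv : ∀ (l : L) (m : M), p (l • m) = l • p m := by
    intro l m
    rw [hp, hp, hfequiv, hgequiv, smul_mul', smul_inv']
  have hpker : ∀ m : M, p m ∈ f.ker := fun m => hker_p m
  apply le_antisymm
  · rintro x ⟨hx1, hx2⟩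
    have hpx : p x = x := by
      rw [hp, MonoidHom.mem_ker.mp hx2, map_one, inv_one, mul_one]
    have hmap : (Subgroup.closure {x : M | ∃ (l : L) (m : M), x = (l • m) * m⁻¹})
        ≤ (Subgroup.closure
          {x : M | ∃ (l : L), ∃ k ∈ MonoidHom.ker f, x = (l • k) * k⁻¹}).comap p := by
      rw [Subgroup.closure_le]
      rintro y ⟨l, m, rfl⟩
      simp only [SetLike.mem_coe, Subgroup.mem_comap]
      apply Subgroup.subset_closure
      refine ⟨l, p m, hpker m, ?_⟩
      rw [map_mul, map_inv, hpequiv]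
    have := hmap hx1
    rw [Subgroup.mem_comap, hpx] at this
    exact this
  · rw [Subgroup.closure_le]
    rintro y ⟨l, k, hk, rfl⟩
    refine ⟨Subgroup.subset_closure ⟨l, k, rfl⟩, ?_⟩
    have h1 : f ((l • k) * k⁻¹) = 1 := by
      rw [map_mul, map_inv, hfequiv, MonoidHom.mem_ker.mp hk, smul_one, inv_one, mul_one]
    exact MonoidHom.mem_ker.mpr h1
end

section
/- Let X and L be groups, p : X →* L a group homomorphism and s : L →* X a section of p (p ∘ s = id). Then the comparison map x ↦ (QuotientGroup.mk x, p x) from X to (X ⧸ Subgroup.normalClosure (Set.range s)) × L is surjective. -/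
/-- For a split extension of groups `p : X →* L`, `s : L →* X`,
the comparison map `x ↦ (x mod normalClosure (range s), p x)` from `X` to
`(X ⧸ normalClosure (range s)) × L` is surjective. -/
theorem comparison_to_coinvariants_prod_surjective
    {X L : Type*} [Group X] [Group L]
    (p : X →* L) (s : L →* X) (hsec : ∀ l : L, p (s l) = l) :
    Function.Surjective
      (fun x : X =>
        ((QuotientGroup.mk x : X ⧸ Subgroup.normalClosure (Set.range s)), p x)) := by
  rintro ⟨q, l⟩
  induction q using QuotientGroup.induction_on with
  | H x =>
    refine ⟨x * s ((p x)⁻¹ * l), ?_⟩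
    have hmem : s ((p x)⁻¹ * l) ∈ Subgroup.normalClosure (Set.range s) :=
      Subgroup.subset_normalClosure ⟨_, rfl⟩
    have : (QuotientGroup.mk (x * s ((p x)⁻¹ * l)) :
        X ⧸ Subgroup.normalClosure (Set.range s)) = QuotientGroup.mk x := by
      rw [QuotientGroup.eq]
      simpa using (Subgroup.normalClosure (Set.range ⇑s)).inv_mem hmem
    refine Prod.ext this ?_
    simp [hsec]
end
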